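/- Let K: ℝ≥0 → ℝ be the sparse kernel K(d) = σ·[(2 + cos(2πd/D))/3 · (1 − d/D) + (1/(2π))·sin(2πd/D)] for d < D and K(d) = 0 otherwise, with σ > 0, D > 0. Then K is nonnegative: K(d) ≥ 0 for all d ≥ 0. -/

import Mathlib

open Real Set

private noncomputable def sparseH (t : ℝ) : ℝ :=
  (2 + Real.cos (2 * Real.pi * t)) / 3 * (1 - t)
    + (1 / (2 * Real.pi)) * Real.sin (2 * Real.pi * t)

private lemma sparseH_deriv (t : ℝ) :
    HasDerivAt sparseH
      ((2/3) * (Real.cos (2 * Real.pi * t) - 1)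
        - (2 * Real.pi / 3) * Real.sin (2 * Real.pi * t) * (1 - t)) t := by
  have hct : HasDerivAt (fun x : ℝ => 2 * Real.pi * x) (2 * Real.pi) t := by
    simpa using (hasDerivAt_id t).const_mul (2 * Real.pi)
  have hcos : HasDerivAt (fun x : ℝ => Real.cos (2 * Real.pi * x))
      (-Real.sin (2 * Real.pi * t) * (2 * Real.pi)) t := hct.cos
  have hsin : HasDerivAt (fun x : ℝ => Real.sin (2 * Real.pi * x))
      (Real.cos (2 * Real.pi * t) * (2 * Real.pi)) t := hct.sin
  have h1 : HasDerivAt (fun x : ℝ => (2 + Real.cos (2 * Real.pi * x)) / 3)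
      ((-Real.sin (2 * Real.pi * t) * (2 * Real.pi)) / 3) t := by
    simpa [add_div] using ((hasDerivAt_const t (2:ℝ)).add hcos).div_const 3
  have h2 : HasDerivAt (fun x : ℝ => (1 : ℝ) - x) (-1) t := by
    simpa using (hasDerivAt_id' t).const_sub (1:ℝ)
  have h3 := h1.mul h2
  have h4 := (hsin.const_mul (1 / (2 * Real.pi)))
  have h := h3.add h4
  refine h.congr_deriv ?_
  have hpi := Real.pi_ne_zero
  field_simp
  ring

private lemma theta_cos_le_sin {θ : ℝ} (h0 : 0 ≤ θ) (h1 : θ ≤ Real.pi / 2) :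
    θ * Real.cos θ ≤ Real.sin θ := by
  rcases le_or_gt (Real.cos θ) 0 with hc | hc
  · have hs : 0 ≤ Real.sin θ :=
      Real.sin_nonneg_of_nonneg_of_le_pi h0 (h1.trans (by linarith [Real.pi_pos]))
    nlinarith
  · rcases eq_or_lt_of_le h0 with h0' | h0'
    · simp [← h0']
    · have hlt : θ < Real.pi / 2 := by
        rcases eq_or_lt_of_le h1 with h | h
        · exfalso; rw [h] at hc; simp [Real.cos_pi_div_two] at hc
        · exact h
      have htan : θ < Real.tan θ := Real.lt_tan h0' hlt
      have : θ * Real.cos θ < Real.tan θ * Real.cos θ := by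
        exact mul_lt_mul_of_pos_right htan hc
      rw [Real.tan_mul_cos (ne_of_gt hc)] at this
      exact this.le

private lemma sparse_deriv_nonpos {t : ℝ} (h0 : 0 ≤ t) (h1 : t ≤ 1) :
    (2/3) * (Real.cos (2 * Real.pi * t) - 1)
      - (2 * Real.pi / 3) * Real.sin (2 * Real.pi * t) * (1 - t) ≤ 0 := by
  rcases le_or_gt t (1/2) with ht | ht
  · have hs : 0 ≤ Real.sin (2 * Real.pi * t) :=
      Real.sin_nonneg_of_nonneg_of_le_pi (by positivity) (by nlinarith [Real.pi_pos])
    have hc : Real.cos (2 * Real.pi * t) ≤ 1 := Real.cos_le_one _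
    nlinarith [mul_nonneg (mul_nonneg Real.pi_pos.le hs)
      (show (0:ℝ) ≤ 1 - t by linarith)]
  · have e1 : 2 * Real.pi * t = 2 * Real.pi - 2 * (Real.pi * (1 - t)) := by ring
    rw [e1]
    rw [show (2 : ℝ) * Real.pi - 2 * (Real.pi * (1 - t))
        = 2 * Real.pi - 2 * (Real.pi * (1 - t)) from rfl]
    have e2 : (2 : ℝ) * (Real.pi * (1 - t)) = 2 * Real.pi * (1 - t) := by ring
    rw [show (2:ℝ) * Real.pi - 2 * (Real.pi * (1 - t))
        = 2 * Real.pi - 2 * (Real.pi * (1-t)) from rfl,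
      Real.cos_two_pi_sub, Real.sin_two_pi_sub,
      Real.cos_two_mul, Real.sin_two_mul]
    set θ := Real.pi * (1 - t) with hθ
    have hθ0 : 0 ≤ θ := by have := Real.pi_pos; nlinarith
    have hθ1 : θ ≤ Real.pi / 2 := by have := Real.pi_pos; nlinarith
    have key := theta_cos_le_sin hθ0 hθ1
    have hsθ : 0 ≤ Real.sin θ :=
      Real.sin_nonneg_of_nonneg_of_le_pi hθ0 (hθ1.trans (by linarith [Real.pi_pos]))
    have hsq := Real.sin_sq_add_cos_sq θ
    have key' : Real.pi * (1 - t) * Real.cos θ ≤ Real.sin θ := by rw [hθ] at key; exact key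
    nlinarith [mul_nonneg hsθ (sub_nonneg.2 key'), Real.pi_pos]

private lemma sparseH_nonneg {t : ℝ} (h0 : 0 ≤ t) (h1 : t ≤ 1) : 0 ≤ sparseH t := by
  have hanti : AntitoneOn sparseH (Icc 0 1) := by
    apply antitoneOn_of_deriv_nonpos (convex_Icc 0 1)
    · exact fun x _ => (sparseH_deriv x).continuousAt.continuousWithinAt
    · exact fun x _ => (sparseH_deriv x).differentiableAt.differentiableWithinAt
    · intro x hx
      rw [interior_Icc] at hx
      rw [(sparseH_deriv x).deriv]
      exact sparse_deriv_nonpos hx.1.le hx.2.le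
  have hH1 : sparseH 1 = 0 := by
    simp [sparseH, mul_one, Real.sin_two_pi]
  have := hanti ⟨h0, h1⟩ ⟨zero_le_one, le_refl 1⟩ h1
  rw [hH1] at this
  exact this

theorem sparse_kernel_nonneg (σ D : ℝ) (hσ : 0 < σ) (hD : 0 < D)
    (K : ℝ → ℝ)
    (hK : ∀ d : ℝ, K d =
      if d < D then
        σ * ((2 + Real.cos (2 * Real.pi * d / D)) / 3 * (1 - d / D)
          + (1 / (2 * Real.pi)) * Real.sin (2 * Real.pi * d / D))
      else 0) :
    ∀ d : ℝ, 0 ≤ d → 0 ≤ K d := by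
  intro d hd
  rw [hK]
  split_ifs with h
  · have ht0 : 0 ≤ d / D := div_nonneg hd hD.le
    have ht1 : d / D ≤ 1 := (div_le_one hD).2 h.le
    have := sparseH_nonneg ht0 ht1
    have e : 2 * Real.pi * d / D = 2 * Real.pi * (d / D) := by ring
    rw [e]
    exact mul_nonneg hσ.le (by simpa [sparseH] using this)
  · exact le_refl 0
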